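/- (Relation between the normalizing constants in consecutive dimensions) Let n ≥ 2 and 0 < s < 1, and let C_{m,s} = (∫_{ℝ^m}(1−cos(2πζ_1))/|ζ|^{m+2s} dζ)^{−1} for m ∈ {n−1, n}. Then ∫_{ℝ^n} (1−cos(2πζ_1))/|ζ|^{n+2s} dζ = (∫_ℝ (1+t²)^{−(n+2s)/2} dt) · ∫_{ℝ^{n−1}} (1−cos(2πζ_1))/|ζ'|^{(n−1)+2s} dζ'; equivalently, C_{n−1,s} = C_{n,s} · ∫_ℝ (1+t²)^{−(n+2s)/2} dt. -/

import Mathlib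

open MeasureTheory Filter Metric Set
open scoped ENNReal

noncomputable section

/-- Euclidean space `ℝ^n`. -/
abbrev En (n : ℕ) := EuclideanSpace ℝ (Fin n)

/-- The normalizing constant `C_{n,s}` of the fractional Laplacian. -/
noncomputable def fracConst (n : ℕ) [NeZero n] (s : ℝ) : ℝ :=
  (∫ ζ : En n, (1 - Real.cos (2 * Real.pi * ζ 0)) / ‖ζ‖ ^ ((n : ℝ) + 2 * s))⁻¹

/-- `(-Δ)^s u (x) = L` in the principal value (limit) sense. -/
def HasFracLap (n : ℕ) [NeZero n] (s : ℝ) (u : En n → ℝ) (x : En n) (L : ℝ) : Prop :=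
  Tendsto
    (fun ε : ℝ =>
      fracConst n s *
        ∫ y in {y : En n | ε ≤ dist x y}, (u x - u y) / dist x y ^ ((n : ℝ) + 2 * s))
    (nhdsWithin 0 (Set.Ioi (0 : ℝ))) (nhds L)

/-- Membership in the space `L_{2s}`. -/
def MemL2s (n : ℕ) (s : ℝ) (u : En n → ℝ) : Prop :=
  LocallyIntegrable u volume ∧
    Integrable (fun y : En n => |u y| / (1 + ‖y‖ ^ ((n : ℝ) + 2 * s))) volume

/-- `u ∈ C^{1,1}_loc(Ω)`: near every point of `Ω`, `u` is differentiable with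
locally Lipschitz derivative. -/
def C11On (n : ℕ) (u : En n → ℝ) (Ω : Set (En n)) : Prop :=
  ∀ x ∈ Ω, ∃ ε > 0, ball x ε ⊆ Ω ∧ DifferentiableOn ℝ u (ball x ε) ∧
    ∃ C : NNReal, LipschitzOnWith C (fderiv ℝ u) (ball x ε)

/-- Reflection `x ↦ x^λ = (2λ - x₁, x')` across the hyperplane `{x₁ = λ}`. -/
def reflHyp (n : ℕ) [NeZero n] (lam : ℝ) (x : En n) : En n :=
  WithLp.toLp 2 (Function.update x 0 (2 * lam - x 0))

/-- The half space `Σ_λ = {x : x₁ < λ}`. -/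
def SigmaL (n : ℕ) [NeZero n] (lam : ℝ) : Set (En n) := {x : En n | x 0 < lam}

/-- The half space `ℝ^n_+ = {x : x₁ > 0}`. -/
def HalfSpace (n : ℕ) [NeZero n] : Set (En n) := {x : En n | 0 < x 0}



lemma lintegral_scaled (p : ℝ) {r : ℝ} (hr : 0 < r) :
    ∫⁻ t : ℝ, ENNReal.ofReal ((t ^ 2 + r ^ 2) ^ (-p / 2)) =
      ENNReal.ofReal (r ^ (1 - p)) * ∫⁻ u : ℝ, ENNReal.ofReal ((1 + u ^ 2) ^ (-p / 2)) := by
  have hcont : Continuous fun t : ℝ => (t ^ 2 + r ^ 2) ^ (-p / 2) := by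
    apply Continuous.rpow_const (by continuity)
    intro t; left; positivity
  have hcont2 : Continuous fun u : ℝ => (1 + u ^ 2) ^ (-p / 2) := by
    apply Continuous.rpow_const (by continuity)
    intro t; left; positivity
  have key : ENNReal.ofReal r⁻¹ * ∫⁻ t : ℝ, ENNReal.ofReal ((t ^ 2 + r ^ 2) ^ (-p / 2))
      = ENNReal.ofReal (r ^ (-p)) * ∫⁻ u : ℝ, ENNReal.ofReal ((1 + u ^ 2) ^ (-p / 2)) := by
    have h1 : (ENNReal.ofReal |r⁻¹| • (volume : Measure ℝ)) = Measure.map (fun u : ℝ => r * u) volume :=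
      (Real.map_volume_mul_left hr.ne').symm
    calc ENNReal.ofReal r⁻¹ * ∫⁻ t : ℝ, ENNReal.ofReal ((t ^ 2 + r ^ 2) ^ (-p / 2))
        = ∫⁻ t : ℝ, ENNReal.ofReal ((t ^ 2 + r ^ 2) ^ (-p / 2))
            ∂(ENNReal.ofReal |r⁻¹| • (volume : Measure ℝ)) := by
          rw [lintegral_smul_measure, abs_inv, abs_of_pos hr, smul_eq_mul]
      _ = ∫⁻ t : ℝ, ENNReal.ofReal ((t ^ 2 + r ^ 2) ^ (-p / 2))
            ∂(Measure.map (fun u : ℝ => r * u) volume) := by rw [h1]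
      _ = ∫⁻ u : ℝ, ENNReal.ofReal (((r * u) ^ 2 + r ^ 2) ^ (-p / 2)) := by
          rw [lintegral_map hcont.measurable.ennreal_ofReal (measurable_const_mul r)]
      _ = ∫⁻ u : ℝ, ENNReal.ofReal (r ^ (-p)) * ENNReal.ofReal ((1 + u ^ 2) ^ (-p / 2)) := by
          congr 1; funext u
          have h2 : (r * u) ^ 2 + r ^ 2 = r ^ 2 * (1 + u ^ 2) := by ring
          have h3 : ((r:ℝ) ^ 2 * (1 + u ^ 2)) ^ (-p / 2)
              = (r ^ 2 : ℝ) ^ (-p / 2) * (1 + u ^ 2) ^ (-p / 2) :=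
            Real.mul_rpow (sq_nonneg r) (by positivity)
          have h4 : ((r:ℝ) ^ 2) ^ (-p / 2) = r ^ (-p) := by
            rw [← Real.rpow_natCast r 2, ← Real.rpow_mul hr.le]
            norm_num
            congr 1; ring
          rw [h2, h3, h4, ← ENNReal.ofReal_mul (by positivity)]
      _ = ENNReal.ofReal (r ^ (-p)) * ∫⁻ u : ℝ, ENNReal.ofReal ((1 + u ^ 2) ^ (-p / 2)) := by
          rw [lintegral_const_mul _ hcont2.measurable.ennreal_ofReal]
  have hmul : ENNReal.ofReal r * ENNReal.ofReal r⁻¹ = 1 := by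
    rw [← ENNReal.ofReal_mul hr.le, mul_inv_cancel₀ hr.ne', ENNReal.ofReal_one]
  calc ∫⁻ t : ℝ, ENNReal.ofReal ((t ^ 2 + r ^ 2) ^ (-p / 2))
      = ENNReal.ofReal r * (ENNReal.ofReal r⁻¹ *
          ∫⁻ t : ℝ, ENNReal.ofReal ((t ^ 2 + r ^ 2) ^ (-p / 2))) := by
        rw [← mul_assoc, hmul, one_mul]
    _ = ENNReal.ofReal r * (ENNReal.ofReal (r ^ (-p)) *
          ∫⁻ u : ℝ, ENNReal.ofReal ((1 + u ^ 2) ^ (-p / 2))) := by rw [key]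
    _ = ENNReal.ofReal (r ^ (1 - p)) * ∫⁻ u : ℝ, ENNReal.ofReal ((1 + u ^ 2) ^ (-p / 2)) := by
        rw [← mul_assoc, ← ENNReal.ofReal_mul hr.le]
        congr 2
        rw [show (1:ℝ) - p = 1 + -p by ring, Real.rpow_add hr, Real.rpow_one]


lemma em_symm_apply (k : ℕ) (x : Fin k → ℝ) (i : Fin k) :
    (((MeasurableEquiv.toLp 2 (Fin k → ℝ)).symm).symm x) i = x i := rfl

lemma sq_norm_eq (k : ℕ) (x : Fin k → ℝ) :
    ‖(((MeasurableEquiv.toLp 2 (Fin k → ℝ)).symm).symm x : En k)‖ ^ 2 = ∑ i, x i ^ 2 := by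
  rw [EuclideanSpace.norm_eq, Real.sq_sqrt (by positivity)]
  simp [em_symm_apply, Real.norm_eq_abs, sq_abs]

lemma norm_snoc (m : ℕ) (t : ℝ) (y : Fin m → ℝ) :
    ‖(((MeasurableEquiv.toLp 2 (Fin (m+1) → ℝ)).symm).symm (Fin.snoc y t) : En (m+1))‖
      = Real.sqrt (t ^ 2 + ‖(((MeasurableEquiv.toLp 2 (Fin m → ℝ)).symm).symm y : En m)‖ ^ 2) := by
  rw [← Real.sqrt_sq (norm_nonneg _), sq_norm_eq, sq_norm_eq]
  congr 1
  rw [Fin.sum_univ_castSucc]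
  simp [Fin.snoc_castSucc, Fin.snoc_last, add_comm]

lemma meas_Fk (k : ℕ) [NeZero k] (p : ℝ) (hp : 0 ≤ p) :
    Measurable fun ζ : En k => (1 - Real.cos (2 * Real.pi * ζ 0)) / ‖ζ‖ ^ p := by
  have h1 : Continuous fun ζ : En k => 1 - Real.cos (2 * Real.pi * ζ 0) := by
    fun_prop
  have h2 : Continuous fun ζ : En k => ‖ζ‖ ^ p :=
    (Real.continuous_rpow_const hp).comp continuous_norm
  exact h1.measurable.div h2.measurable

lemma inner_int (p : ℝ) (c : ℝ) (hc : 0 ≤ c) {r : ℝ} (hr : 0 < r) :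
    ∫⁻ t : ℝ, ENNReal.ofReal (c / Real.sqrt (t ^ 2 + r ^ 2) ^ p)
      = ENNReal.ofReal (c / r ^ (p - 1)) *
          ∫⁻ u : ℝ, ENNReal.ofReal ((1 + u ^ 2) ^ (-p / 2)) := by
  have hpt : ∀ t : ℝ, c / Real.sqrt (t ^ 2 + r ^ 2) ^ p
      = c * (t ^ 2 + r ^ 2) ^ (-p / 2) := by
    intro t
    have h0 : (0:ℝ) < t ^ 2 + r ^ 2 := by positivity
    rw [Real.sqrt_eq_rpow, ← Real.rpow_mul h0.le, div_eq_mul_inv, ← Real.rpow_neg h0.le,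
      show -(1/2 * p) = -p/2 by ring]
  simp_rw [hpt]
  have hmeas : Measurable fun t : ℝ => ENNReal.ofReal ((t ^ 2 + r ^ 2) ^ (-p / 2)) := by
    refine Continuous.measurable ?_ |>.ennreal_ofReal
    apply Continuous.rpow_const (by continuity)
    intro t; left; positivity
  simp_rw [fun t : ℝ => ENNReal.ofReal_mul (p := c) (q := (t ^ 2 + r ^ 2) ^ (-p / 2)) hc]
  rw [lintegral_const_mul _ hmeas, lintegral_scaled p hr, ← mul_assoc,
    ← ENNReal.ofReal_mul hc]
  congr 2
  rw [show (1:ℝ) - p = -(p-1) by ring, Real.rpow_neg hr.le, div_eq_mul_inv]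

lemma lintegral_split (m : ℕ) [NeZero m] (s : ℝ) (hs0 : 0 < s) :
    (∫⁻ ζ : En (m+1), ENNReal.ofReal
        ((1 - Real.cos (2 * Real.pi * ζ 0)) / ‖ζ‖ ^ (((m+1 : ℕ) : ℝ) + 2 * s)))
      = (∫⁻ u : ℝ, ENNReal.ofReal ((1 + u ^ 2) ^ (-(((m+1:ℕ):ℝ) + 2 * s) / 2))) *
        ∫⁻ ζ : En m, ENNReal.ofReal
          ((1 - Real.cos (2 * Real.pi * ζ 0)) / ‖ζ‖ ^ (((m : ℕ) : ℝ) + 2 * s)) := by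
  set p : ℝ := ((m+1:ℕ):ℝ) + 2*s with hpdef
  have hp0 : (0:ℝ) < p := by rw [hpdef]; push_cast; positivity
  set Fn : En (m+1) → ℝ :=
    fun ζ => (1 - Real.cos (2 * Real.pi * ζ 0)) / ‖ζ‖ ^ p with hFndef
  set Fm : En m → ℝ :=
    fun ζ => (1 - Real.cos (2 * Real.pi * ζ 0)) / ‖ζ‖ ^ (((m : ℕ) : ℝ) + 2 * s) with hFmdef
  set K : ℝ≥0∞ := ∫⁻ u : ℝ, ENNReal.ofReal ((1 + u ^ 2) ^ (-p / 2)) with hKdef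
  set em1 := (MeasurableEquiv.toLp 2 (Fin (m+1) → ℝ)).symm with hem1
  set em := (MeasurableEquiv.toLp 2 (Fin m → ℝ)).symm with hem
  set φ := MeasurableEquiv.piFinSuccAbove (fun _ : Fin (m+1) => ℝ) (Fin.last m) with hφ
  have hFnmeas : Measurable Fn := meas_Fk (m+1) p hp0.le
  have hFmmeas : Measurable Fm := meas_Fk m _ (by positivity)
  have step1 : (∫⁻ ζ : En (m+1), ENNReal.ofReal (Fn ζ))
      = ∫⁻ x : Fin (m+1) → ℝ, ENNReal.ofReal (Fn (em1.symm x)) :=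
    (((EuclideanSpace.volume_preserving_symm_measurableEquiv_toLp (Fin (m+1))).symm _).lintegral_comp
      hFnmeas.ennreal_ofReal).symm
  have step2 : (∫⁻ x : Fin (m+1) → ℝ, ENNReal.ofReal (Fn (em1.symm x)))
      = ∫⁻ z : ℝ × (Fin m → ℝ), ENNReal.ofReal (Fn (em1.symm (φ.symm z))) :=
    (((volume_preserving_piFinSuccAbove (fun _ : Fin (m+1) => ℝ) (Fin.last m)).symm _).lintegral_comp
      (hFnmeas.ennreal_ofReal.comp em1.symm.measurable)).symm
  have hsnoc : ∀ (t : ℝ) (y : Fin m → ℝ),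
      Fn (em1.symm (φ.symm (t, y))) = (1 - Real.cos (2 * Real.pi * y 0)) /
        Real.sqrt (t ^ 2 + ‖(em.symm y : En m)‖ ^ 2) ^ p := by
    intro t y
    have h1 : φ.symm (t, y) = Fin.snoc y t := by
      simp [hφ, MeasurableEquiv.piFinSuccAbove_symm_apply, Fin.insertNth_last', Fin.snocEquiv]
    rw [h1, hFndef]
    simp only
    rw [norm_snoc, ← hem]
    have hc0 : (em1.symm (Fin.snoc y t) : En (m+1)) 0 = y 0 := by
      show (Fin.snoc y t : Fin (m+1) → ℝ) 0 = y 0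
      rw [show (0 : Fin (m+1)) = Fin.castSucc 0 by simp, Fin.snoc_castSucc]
    rw [hc0]
  have step3 : (∫⁻ z : ℝ × (Fin m → ℝ), ENNReal.ofReal (Fn (em1.symm (φ.symm z))))
      = ∫⁻ y : Fin m → ℝ, ∫⁻ t : ℝ, ENNReal.ofReal (Fn (em1.symm (φ.symm (t, y)))) := by
    rw [MeasureTheory.Measure.volume_eq_prod,
      lintegral_prod_symm' (fun z : ℝ × (Fin m → ℝ) => ENNReal.ofReal (Fn (em1.symm (φ.symm z))))
        (by exact hFnmeas.ennreal_ofReal.comp (em1.symm.measurable.comp φ.symm.measurable))]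
  have h0ae : ∀ᵐ y : Fin m → ℝ, y ≠ 0 := by
    rw [ae_iff]
    convert measure_singleton (μ := (volume : Measure (Fin m → ℝ))) (0 : Fin m → ℝ) using 2
    ext y; simp
  have step4 : (∫⁻ y : Fin m → ℝ, ∫⁻ t : ℝ, ENNReal.ofReal (Fn (em1.symm (φ.symm (t, y)))))
      = ∫⁻ y : Fin m → ℝ, ENNReal.ofReal (Fm (em.symm y)) * K := by
    refine lintegral_congr_ae ?_
    filter_upwards [h0ae] with y hy
    have hr : (0:ℝ) < ‖(em.symm y : En m)‖ := by
      rw [norm_pos_iff]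
      intro h
      exact hy (em.symm.injective (h.trans (by rfl)))
    have hc : (0:ℝ) ≤ 1 - Real.cos (2 * Real.pi * y 0) := by
      have := Real.cos_le_one (2 * Real.pi * y 0); linarith
    simp_rw [hsnoc _ y]
    rw [inner_int p _ hc hr]
    congr 2
    rw [hFmdef]
    simp only
    congr 2
    rw [hpdef]; push_cast; ring
  have step5 : (∫⁻ y : Fin m → ℝ, ENNReal.ofReal (Fm (em.symm y)) * K)
      = (∫⁻ ζ : En m, ENNReal.ofReal (Fm ζ)) * K := by
    rw [lintegral_mul_const K (by exact hFmmeas.ennreal_ofReal.comp em.symm.measurable)]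
    congr 1
    exact ((EuclideanSpace.volume_preserving_symm_measurableEquiv_toLp (Fin m)).symm _).lintegral_comp
      hFmmeas.ennreal_ofReal
  rw [step1, step2, step3, step4, step5, mul_comm]

lemma Fk_nonneg (k : ℕ) [NeZero k] (p : ℝ) (ζ : En k) :
    0 ≤ (1 - Real.cos (2 * Real.pi * ζ 0)) / ‖ζ‖ ^ p :=
  div_nonneg (by have := Real.cos_le_one (2 * Real.pi * ζ 0); linarith)
    (Real.rpow_nonneg (norm_nonneg _) _)

lemma int_eq_lint (k : ℕ) [NeZero k] (p : ℝ) (hp : 0 ≤ p) :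
    (∫ ζ : En k, (1 - Real.cos (2 * Real.pi * ζ 0)) / ‖ζ‖ ^ p)
      = (∫⁻ ζ : En k, ENNReal.ofReal
          ((1 - Real.cos (2 * Real.pi * ζ 0)) / ‖ζ‖ ^ p)).toReal :=
  integral_eq_lintegral_of_nonneg_ae (Eventually.of_forall (Fk_nonneg k p))
    (meas_Fk k p hp).aestronglyMeasurable

lemma g_cont (p : ℝ) : Continuous fun t : ℝ => (1 + t ^ 2) ^ (-p / 2) := by
  apply Continuous.rpow_const (by continuity)
  intro t; left; positivity

lemma g_int_eq_lint (p : ℝ) :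
    (∫ t : ℝ, (1 + t ^ 2) ^ (-p / 2))
      = (∫⁻ t : ℝ, ENNReal.ofReal ((1 + t ^ 2) ^ (-p / 2))).toReal :=
  integral_eq_lintegral_of_nonneg_ae
    (Eventually.of_forall fun t => Real.rpow_nonneg (by positivity) _)
    (g_cont p).measurable.aestronglyMeasurable

lemma g_integrable (p : ℝ) (hp : 2 ≤ p) :
    Integrable fun t : ℝ => (1 + t ^ 2) ^ (-p / 2) := by
  refine integrable_inv_one_add_sq.mono (g_cont p).measurable.aestronglyMeasurable ?_
  filter_upwards with t
  rw [Real.norm_eq_abs, Real.norm_eq_abs, abs_of_nonneg (by positivity),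
    abs_of_nonneg (by positivity)]
  calc (1 + t ^ 2) ^ (-p / 2) ≤ (1 + t ^ 2) ^ (-1 : ℝ) :=
        Real.rpow_le_rpow_of_exponent_le (by nlinarith) (by linarith)
    _ = (1 + t ^ 2)⁻¹ := by rw [Real.rpow_neg_one]
    _ ≤ (1 + t ^ 2)⁻¹ := le_rfl

lemma g_pos (p : ℝ) (hp : 2 ≤ p) : 0 < ∫ t : ℝ, (1 + t ^ 2) ^ (-p / 2) := by
  rw [integral_pos_iff_support_of_nonneg_ae
    (Eventually.of_forall fun t => Real.rpow_nonneg (by positivity) _) (g_integrable p hp)]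
  have hs : Function.support (fun t : ℝ => (1 + t ^ 2) ^ (-p / 2)) = Set.univ := by
    ext t
    simp only [Function.mem_support, Set.mem_univ, iff_true]
    positivity
  rw [hs]
  simp [Real.volume_univ]


/-- **Relation between the normalizing constants in consecutive dimensions.** -/
theorem constant_relation
    (n : ℕ) [NeZero n] [NeZero (n - 1)] (hn : 2 ≤ n) (s : ℝ)
    (hs0 : 0 < s) (hs1 : s < 1) :
    (∫ ζ : En n, (1 - Real.cos (2 * Real.pi * ζ 0)) / ‖ζ‖ ^ ((n : ℝ) + 2 * s)) =
        (∫ t : ℝ, (1 + t ^ 2) ^ (-((n : ℝ) + 2 * s) / 2)) *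
          ∫ ζ : En (n - 1),
            (1 - Real.cos (2 * Real.pi * ζ 0)) / ‖ζ‖ ^ (((n - 1 : ℕ) : ℝ) + 2 * s) ∧
      fracConst (n - 1) s =
        fracConst n s * ∫ t : ℝ, (1 + t ^ 2) ^ (-((n : ℝ) + 2 * s) / 2) := by
  obtain ⟨m, rfl⟩ : ∃ m, n = m + 1 := ⟨n - 1, by omega⟩
  haveI hmz : NeZero m := ⟨by omega⟩
  have hp2 : (2:ℝ) ≤ ((m+1 : ℕ) : ℝ) + 2 * s := by
    have : (1:ℕ) ≤ m := by omega
    have : (1:ℝ) ≤ (m:ℝ) := by exact_mod_cast this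
    push_cast; linarith
  have hp0 : (0:ℝ) ≤ ((m+1 : ℕ) : ℝ) + 2 * s := by linarith
  have hq0 : (0:ℝ) ≤ ((m : ℕ) : ℝ) + 2 * s := by positivity
  have key : (∫ ζ : En (m+1), (1 - Real.cos (2 * Real.pi * ζ 0)) / ‖ζ‖ ^ (((m+1:ℕ) : ℝ) + 2 * s)) =
      (∫ t : ℝ, (1 + t ^ 2) ^ (-(((m+1:ℕ) : ℝ) + 2 * s) / 2)) *
        ∫ ζ : En m, (1 - Real.cos (2 * Real.pi * ζ 0)) / ‖ζ‖ ^ (((m : ℕ) : ℝ) + 2 * s) := by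
    rw [int_eq_lint (m+1) _ hp0, int_eq_lint m _ hq0, g_int_eq_lint,
      lintegral_split m s hs0, ENNReal.toReal_mul]
  have hJ : (0:ℝ) < ∫ t : ℝ, (1 + t ^ 2) ^ (-(((m+1:ℕ) : ℝ) + 2 * s) / 2) := g_pos _ hp2
  constructor
  · exact_mod_cast key
  · show (∫ ζ : En m, (1 - Real.cos (2 * Real.pi * ζ 0)) / ‖ζ‖ ^ (((m+1-1:ℕ) : ℝ) + 2 * s))⁻¹ = _
    simp only [Nat.add_sub_cancel]
    rw [fracConst]
    push_cast
    push_cast at key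
    rw [key, mul_inv]
    rw [mul_comm _ ((∫ ζ : En m, (1 - Real.cos (2 * Real.pi * ζ 0)) / ‖ζ‖ ^ ((m : ℝ) + 2 * s))⁻¹),
      mul_assoc, inv_mul_cancel₀ (ne_of_gt (by exact_mod_cast hJ)), mul_one]
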